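/- arXiv:2303.04943 — 5 statements merged into one kernel-verified Lean document; each statement's English description precedes it below -/
import Mathlib

section
/- For every fixed 0 ≤ x < y ≤ 1, the function z ↦ h(x, y, z) is strictly increasing on (0, ∞) ∖ {1}; that is, for all z, z' ∈ (0, ∞) ∖ {1} with z < z', one has h(x, y, z) < h(x, y, z'). -/
noncomputable section
open Real Set

def gz (z : ℝ) : ℝ := 1 / (z - 1) - z / (z - 1) ^ 2 * Real.log z

lemma log_gt_one_sub_inv {z : ℝ} (hz : 0 < z) (h1 : z ≠ 1) : 1 - z⁻¹ < Real.log z := by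
  have h := Real.log_lt_sub_one_of_pos (inv_pos.2 hz) (by simpa using h1)
  rw [Real.log_inv] at h
  linarith

def psiF (z : ℝ) : ℝ := (z + 1) * Real.log z - 2 * (z - 1)

lemma hasDerivAt_psiF {z : ℝ} (hz : 0 < z) :
    HasDerivAt psiF (Real.log z + z⁻¹ - 1) z := by
  have h1 : HasDerivAt (fun z : ℝ => (z + 1) * Real.log z)
      (1 * Real.log z + (z + 1) * z⁻¹) z :=
    ((hasDerivAt_id z).add_const 1).mul (Real.hasDerivAt_log hz.ne')
  have h2 : HasDerivAt (fun z : ℝ => 2 * (z - 1)) 2 z := by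
    simpa using ((hasDerivAt_id z).sub_const 1).const_mul 2
  have := h1.fun_sub h2
  refine this.congr_deriv ?_
  field_simp
  ring

lemma psiF_neg {z : ℝ} (hz : 0 < z) (h1 : z < 1) : psiF z < 0 := by
  have hmono : StrictMonoOn psiF (Set.Ioc 0 1) := by
    apply strictMonoOn_of_deriv_pos (convex_Ioc 0 1)
    · exact fun t ht => (hasDerivAt_psiF ht.1).continuousAt.continuousWithinAt
    · intro t ht
      rw [interior_Ioc] at ht
      rw [(hasDerivAt_psiF ht.1).deriv]
      have := log_gt_one_sub_inv ht.1 ht.2.ne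
      linarith
  have := hmono ⟨hz, h1.le⟩ ⟨zero_lt_one, le_refl 1⟩ h1
  simpa [psiF] using this

lemma psiF_pos {z : ℝ} (h1 : 1 < z) : 0 < psiF z := by
  have hmono : StrictMonoOn psiF (Set.Ici 1) := by
    apply strictMonoOn_of_deriv_pos (convex_Ici 1)
    · exact fun t ht => (hasDerivAt_psiF (by linarith [mem_Ici.1 ht] : (0:ℝ) < t)).continuousAt.continuousWithinAt
    · intro t ht
      rw [interior_Ici] at ht
      have ht1 : (1:ℝ) < t := ht
      rw [(hasDerivAt_psiF (by linarith)).deriv]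
      have := log_gt_one_sub_inv (by linarith : (0:ℝ) < t) ht1.ne'
      linarith
  have := hmono (Set.mem_Ici.2 (le_refl 1)) h1.le h1
  simpa [psiF] using this

def phiF (z : ℝ) : ℝ := z ^ 2 - 1 - 2 * z * Real.log z

lemma hasDerivAt_phiF {z : ℝ} (hz : 0 < z) :
    HasDerivAt phiF (2 * z - 2 * Real.log z - 2) z := by
  have h1 : HasDerivAt (fun z : ℝ => z ^ 2 - 1) (2 * z) z := by
    simpa using (hasDerivAt_pow 2 z).sub_const 1
  have h2 : HasDerivAt (fun z : ℝ => 2 * z * Real.log z)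
      (2 * Real.log z + 2 * z * z⁻¹) z := by
    simpa using ((hasDerivAt_id' z).const_mul 2).fun_mul (Real.hasDerivAt_log hz.ne')
  have := h1.fun_sub h2
  refine this.congr_deriv ?_
  field_simp
  ring

lemma phiF_deriv_pos {t : ℝ} (ht : 0 < t) (h1 : t ≠ 1) :
    0 < 2 * t - 2 * Real.log t - 2 := by
  have := Real.log_lt_sub_one_of_pos ht h1
  linarith

lemma phiF_neg {z : ℝ} (hz : 0 < z) (h1 : z < 1) : phiF z < 0 := by
  have hmono : StrictMonoOn phiF (Set.Ioc 0 1) := by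
    apply strictMonoOn_of_deriv_pos (convex_Ioc 0 1)
    · exact fun t ht => (hasDerivAt_phiF ht.1).continuousAt.continuousWithinAt
    · intro t ht
      rw [interior_Ioc] at ht
      rw [(hasDerivAt_phiF ht.1).deriv]
      exact phiF_deriv_pos ht.1 ht.2.ne
  have := hmono ⟨hz, h1.le⟩ ⟨zero_lt_one, le_refl 1⟩ h1
  simpa [phiF] using this

lemma phiF_pos {z : ℝ} (h1 : 1 < z) : 0 < phiF z := by
  have hmono : StrictMonoOn phiF (Set.Ici 1) := by
    apply strictMonoOn_of_deriv_pos (convex_Ici 1)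
    · exact fun t ht => (hasDerivAt_phiF (by linarith [mem_Ici.1 ht] : (0:ℝ) < t)).continuousAt.continuousWithinAt
    · intro t ht
      rw [interior_Ici] at ht
      have ht1 : (1:ℝ) < t := ht
      rw [(hasDerivAt_phiF (by linarith)).deriv]
      exact phiF_deriv_pos (by linarith) ht1.ne'
  have := hmono (Set.mem_Ici.2 (le_refl 1)) h1.le h1
  simpa [phiF] using this

lemma hasDerivAt_gz {z : ℝ} (hz : 0 < z) (h1 : z ≠ 1) :
    HasDerivAt gz (psiF z / (z - 1) ^ 3) z := by
  have hne : z - 1 ≠ 0 := sub_ne_zero.2 h1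
  have hd1 : HasDerivAt (fun z : ℝ => z - 1) 1 z := (hasDerivAt_id z).sub_const 1
  have ht1 : HasDerivAt (fun z : ℝ => 1 / (z - 1))
      ((0 * (z - 1) - 1 * 1) / (z - 1) ^ 2) z :=
    (hasDerivAt_const z 1).div hd1 hne
  have hd2 : HasDerivAt (fun z : ℝ => (z - 1) ^ 2) (2 * (z - 1) ^ 1 * 1) z := hd1.pow 2
  have ht2 : HasDerivAt (fun z : ℝ => z / (z - 1) ^ 2)
      ((1 * (z - 1) ^ 2 - z * (2 * (z - 1) ^ 1 * 1)) / ((z - 1) ^ 2) ^ 2) z :=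
    (hasDerivAt_id z).div hd2 (pow_ne_zero 2 hne)
  have ht3 := ht2.fun_mul (Real.hasDerivAt_log hz.ne')
  have := ht1.fun_sub ht3
  refine this.congr_deriv ?_
  unfold psiF
  field_simp
  ring

lemma gz_strictMonoOn_Ioo : StrictMonoOn gz (Set.Ioo 0 1) := by
  apply strictMonoOn_of_deriv_pos (convex_Ioo 0 1)
  · exact fun t ht => (hasDerivAt_gz ht.1 ht.2.ne).continuousAt.continuousWithinAt
  · intro t ht
    rw [interior_Ioo] at ht
    rw [(hasDerivAt_gz ht.1 ht.2.ne).deriv]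
    have h1 : psiF t < 0 := psiF_neg ht.1 ht.2
    have h2 : (t - 1) ^ 3 < 0 := by
      apply Odd.pow_neg ⟨1, by norm_num⟩
      linarith [ht.2]
    exact div_pos_of_neg_of_neg h1 h2

lemma gz_strictMonoOn_Ioi : StrictMonoOn gz (Set.Ioi 1) := by
  apply strictMonoOn_of_deriv_pos (convex_Ioi 1)
  · intro t ht
    have ht1 : (1:ℝ) < t := ht
    exact (hasDerivAt_gz (by linarith) ht1.ne').continuousAt.continuousWithinAt
  · intro t ht
    rw [interior_Ioi] at ht
    have ht1 : (1:ℝ) < t := ht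
    rw [(hasDerivAt_gz (by linarith) ht1.ne').deriv]
    exact div_pos (psiF_pos ht1) (pow_pos (by linarith) 3)

lemma gz_eq {z : ℝ} (h1 : z ≠ 1) : gz z + 1 / 2 = phiF z / (2 * (z - 1) ^ 2) := by
  have hne : z - 1 ≠ 0 := sub_ne_zero.2 h1
  unfold gz phiF
  field_simp
  ring

lemma gz_lt_half {z : ℝ} (hz : 0 < z) (h1 : z < 1) : gz z < -(1/2) := by
  have h := gz_eq h1.ne
  have hden : 0 < 2 * (z - 1) ^ 2 := by
    have hne : z - 1 ≠ 0 := sub_ne_zero.2 h1.ne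
    have := lt_of_le_of_ne (sq_nonneg (z - 1)) (Ne.symm (pow_ne_zero 2 hne))
    linarith
  have := div_neg_of_neg_of_pos (phiF_neg hz h1) hden
  linarith

lemma gz_gt_half {z : ℝ} (h1 : 1 < z) : -(1/2) < gz z := by
  have h := gz_eq h1.ne'
  have hden : 0 < 2 * (z - 1) ^ 2 := by
    have hne : z - 1 ≠ 0 := sub_ne_zero.2 h1.ne'
    have := lt_of_le_of_ne (sq_nonneg (z - 1)) (Ne.symm (pow_ne_zero 2 hne))
    linarith
  have := div_pos (phiF_pos h1) hden
  linarith

lemma gz_lt {z z' : ℝ} (hz : 0 < z) (hz1 : z ≠ 1) (hz' : 0 < z') (hz1' : z' ≠ 1)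
    (hlt : z < z') : gz z < gz z' := by
  rcases lt_or_gt_of_ne hz1' with h' | h'
  · exact gz_strictMonoOn_Ioo ⟨hz, hlt.trans h'⟩ ⟨hz', h'⟩ hlt
  · rcases lt_or_gt_of_ne hz1 with h | h
    · exact (gz_lt_half hz h).trans (gz_gt_half h')
    · exact gz_strictMonoOn_Ioi h h' hlt

/-- The mixed p-spin function `ξ(x) = Σ_j λ_j x^{p_j}`. -/
def xiF (n : ℕ) (p : Fin n → ℕ) (lam : Fin n → ℝ) : ℝ → ℝ :=
  fun x => ∑ j, lam j * x ^ p j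


lemma hasDerivAt_xiF (n : ℕ) (p : Fin n → ℕ) (lam : Fin n → ℝ) (t : ℝ) :
    HasDerivAt (xiF n p lam) (∑ j, lam j * (p j * t ^ (p j - 1))) t := by
  apply HasDerivAt.fun_sum
  intro j _
  exact (hasDerivAt_pow (p j) t).const_mul (lam j)

/-- `h(x,y,z)`. -/
def hfun (ξ : ℝ → ℝ) (x y z : ℝ) : ℝ :=
  ξ y - ξ x - deriv ξ x * (y - x) +
    (deriv ξ y - deriv ξ x) * (y - x) * (1 / (z - 1) - z / (z - 1) ^ 2 * Real.log z)

/-- `r₂(x,y)`. -/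
def r2f (ξ : ℝ → ℝ) (x y : ℝ) : ℝ :=
  deriv (deriv ξ) y * (y - x) / (deriv ξ y - deriv ξ x)

/-- For fixed `0 ≤ x < y ≤ 1`, the function `z ↦ h(x,y,z)` is strictly
increasing on `(0, ∞) \ {1}`. -/
theorem hfun_strictMono_in_z
    (n : ℕ) (hn : 1 ≤ n) (p : Fin n → ℕ) (hp2 : ∀ i, 2 < p i) (hpmono : StrictMono p)
    (lam : Fin n → ℝ) (hlam : ∀ i, 0 < lam i) (hlamsum : ∑ i, lam i = 1)
    (x y : ℝ) (hx : 0 ≤ x) (hxy : x < y) (hy : y ≤ 1) :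
    ∀ z z' : ℝ, 0 < z → z ≠ 1 → 0 < z' → z' ≠ 1 → z < z' →
      hfun (xiF n p lam) x y z < hfun (xiF n p lam) x y z' := by
  intro z z' hz hz1 hz' hz1' hlt
  have hB : 0 < (deriv (xiF n p lam) y - deriv (xiF n p lam) x) * (y - x) := by
    have hdx := (hasDerivAt_xiF n p lam x).deriv
    have hdy := (hasDerivAt_xiF n p lam y).deriv
    have hsum : ∑ j, lam j * (p j * x ^ (p j - 1)) < ∑ j, lam j * (p j * y ^ (p j - 1)) := by
      apply Finset.sum_lt_sum_of_nonempty (Finset.univ_nonempty_iff.2 ⟨⟨0, hn⟩⟩)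
      intro j _
      apply mul_lt_mul_of_pos_left _ (hlam j)
      apply mul_lt_mul_of_pos_left _ (by exact_mod_cast (by linarith [hp2 j] : 0 < p j))
      exact pow_lt_pow_left₀ hxy hx (by have := hp2 j; omega)
    apply mul_pos _ (by linarith)
    rw [hdx, hdy]
    linarith
  have hg := gz_lt hz hz1 hz' hz1' hlt
  have hmul := mul_lt_mul_of_pos_left hg hB
  simp only [hfun]
  unfold gz at hmul
  linarith
end
end

section
/- The function f : (0, ∞) → ℝ defined by f(z) = (z − 1 − z·log z)/(z − 1)² for z ≠ 1 and f(1) = −1/2 is strictly increasing on (0, ∞). -/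
open Real Set intervalIntegral

lemma denom_pos' {z t : ℝ} (hz : 0 < z) (ht : t ∈ Set.Icc (0:ℝ) 1) :
    0 < t + (1 - t) * z := by
  rcases ht with ⟨h0, h1⟩
  have : (0:ℝ) ≤ (1 - t) * z := mul_nonneg (by linarith) hz.le
  rcases eq_or_lt_of_le h0 with h | h
  · simp [← h] at *; linarith
  · linarith

lemma cont_integrand' {z : ℝ} (hz : 0 < z) :
    ContinuousOn (fun t : ℝ => t / (t + (1 - t) * z)) (Set.Icc 0 1) := by
  apply ContinuousOn.div continuousOn_id (by fun_prop)
  intro t ht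
  exact (denom_pos' hz ht).ne'

lemma f_repr {z : ℝ} (hz : 0 < z) :
    (if z = 1 then -(1 / 2 : ℝ) else (z - 1 - z * Real.log z) / (z - 1) ^ 2)
      = -∫ t in (0:ℝ)..1, t / (t + (1 - t) * z) := by
  by_cases h1 : z = 1
  · subst h1
    simp only [if_pos rfl]
    have : ∀ t : ℝ, t / (t + (1 - t) * 1) = t := by
      intro t
      rw [show t + (1 - t) * 1 = 1 by ring, div_one]
    simp only [this]
    rw [integral_id]
    norm_num
  · rw [if_neg h1]
    have ha : (1 : ℝ) - z ≠ 0 := sub_ne_zero.2 (Ne.symm h1)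
    set F : ℝ → ℝ := fun t => t / (1 - z) - z / (1 - z) ^ 2 * Real.log (t + (1 - t) * z)
      with hF
    have hderiv : ∀ t ∈ Set.uIcc (0:ℝ) 1, HasDerivAt F (t / (t + (1 - t) * z)) t := by
      intro t ht
      rw [Set.uIcc_of_le (by norm_num : (0:ℝ) ≤ 1)] at ht
      have hd : t + (1 - t) * z ≠ 0 := (denom_pos' hz ht).ne'
      have hinner : HasDerivAt (fun t : ℝ => t + (1 - t) * z) (1 + -1 * z) t := by
        have := ((hasDerivAt_id t).const_sub 1).mul_const z
        exact (hasDerivAt_id t).add this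
      have hlog := (hinner.log hd).const_mul (z / (1 - z) ^ 2)
      have := ((hasDerivAt_id t).div_const (1 - z)).sub hlog
      refine this.congr_deriv ?_
      generalize hdd : t + (1 - t) * z = d at hd ⊢
      field_simp
      subst hdd
      ring
    have hint : IntervalIntegrable (fun t : ℝ => t / (t + (1 - t) * z))
        MeasureTheory.volume 0 1 :=
      (cont_integrand' hz).intervalIntegrable_of_Icc (by norm_num)
    rw [intervalIntegral.integral_eq_sub_of_hasDerivAt hderiv hint]
    simp only [hF]
    rw [show (1:ℝ) + (1 - 1) * z = 1 by ring, show (0:ℝ) + (1 - 0) * z = z by ring,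
      Real.log_one]
    have hz1 : z - 1 ≠ 0 := sub_ne_zero.2 h1
    field_simp
    ring

/-- The continuous extension `f(z) = (z - 1 - z log z)/(z-1)²`, `f(1) = -1/2`,
is strictly increasing on `(0, ∞)`. -/
theorem f_strictMonoOn :
    StrictMonoOn
      (fun z : ℝ => if z = 1 then -(1 / 2) else (z - 1 - z * Real.log z) / (z - 1) ^ 2)
      (Set.Ioi 0) := by
  intro x hx y hy hxy
  simp only [Set.mem_Ioi] at hx hy
  simp only [f_repr hx, f_repr hy]
  apply neg_lt_neg
  apply intervalIntegral.integral_lt_integral_of_continuousOn_of_le_of_exists_lt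
    (by norm_num) (cont_integrand' hy) (cont_integrand' hx)
  · intro t ht
    have ht' : t ∈ Set.Icc (0:ℝ) 1 := ⟨le_of_lt ht.1, ht.2⟩
    have hdx := denom_pos' hx ht'
    have h1t : (0:ℝ) ≤ 1 - t := by linarith [ht.2]
    gcongr
    all_goals first | exact ht.1.le | exact hdx | nlinarith
  · refine ⟨1/2, by norm_num, ?_⟩
    have hdx : (0:ℝ) < 1/2 + (1 - 1/2) * x := by nlinarith
    gcongr
    all_goals first | exact hdx | nlinarith
end

section
/- Fix 0 < x < y ≤ 1 and assume r₂(x, y) ≠ 1. Then the partial derivative ∂h^F/∂x (x, y) has the same sign as (ξ'(y) − ξ'(x))² − ξ''(x)ξ''(y)(y−x)²; that is, ∂h^F/∂x (x,y) is positive, zero, or negative exactly when (ξ'(y)−ξ'(x))² − ξ''(x)ξ''(y)(y−x)² is positive, zero, or negative respectively. -/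
noncomputable section

/-- First derivative of `xiF`. -/
def S1f (n : ℕ) (p : Fin n → ℕ) (lam : Fin n → ℝ) : ℝ → ℝ :=
  fun t => ∑ j, lam j * ((p j : ℝ) * t ^ (p j - 1))

/-- Second derivative of `xiF`. -/
def S2f (n : ℕ) (p : Fin n → ℕ) (lam : Fin n → ℝ) : ℝ → ℝ :=
  fun t => ∑ j, lam j * ((p j : ℝ) * (((p j - 1 : ℕ) : ℝ) * t ^ (p j - 1 - 1)))

lemma aux_deriv (t : ℝ) (ht : 0 < t) :
    HasDerivAt (fun s => s^2 - 1 - 2*s*Real.log s) (2*t - 2*Real.log t - 2) t := by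
  have h1 : HasDerivAt (fun s : ℝ => s^2) (2*t) t := by
    simpa using hasDerivAt_pow 2 t
  have h2 : HasDerivAt (fun s : ℝ => s * Real.log s) (1 * Real.log t + t * t⁻¹) t :=
    (hasDerivAt_id t).mul (Real.hasDerivAt_log ht.ne')
  have h3 : HasDerivAt (fun s : ℝ => 2*(s * Real.log s)) (2*(1 * Real.log t + t * t⁻¹)) t :=
    h2.const_mul 2
  have heq : (fun s : ℝ => s^2 - 1 - 2*s*Real.log s) = fun s => s^2 - 1 - 2*(s*Real.log s) := by
    funext s; ring
  rw [heq]
  have := (h1.sub_const 1).sub h3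
  exact this.congr_deriv (by rw [mul_inv_cancel₀ ht.ne']; ring)

lemma key_pos (z : ℝ) (hz : 0 < z) (hz1 : z ≠ 1) :
    0 < (z^2 - 1 - 2*z*Real.log z)/(z-1)^3 := by
  set f : ℝ → ℝ := fun s => s^2 - 1 - 2*s*Real.log s with hf
  have hf1 : f 1 = 0 := by simp [hf]
  rcases lt_or_gt_of_ne hz1 with h | h
  · have hmono : StrictMonoOn f (Set.Icc z 1) := by
      apply strictMonoOn_of_deriv_pos (convex_Icc z 1)
      · intro t htm
        exact (aux_deriv t (lt_of_lt_of_le hz htm.1)).continuousAt.continuousWithinAt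
      · intro t htm
        rw [interior_Icc] at htm
        have ht0 : 0 < t := lt_trans hz htm.1
        rw [(aux_deriv t ht0).deriv]
        have := Real.log_lt_sub_one_of_pos ht0 (ne_of_lt htm.2)
        linarith
    have hfz : f z < 0 := by
      have := hmono (Set.left_mem_Icc.2 h.le) (Set.right_mem_Icc.2 h.le) h
      linarith [hf1]
    have hden : (z-1)^3 < 0 := by
      have : z - 1 < 0 := by linarith
      exact Odd.pow_neg ⟨1, by norm_num⟩ this
    rw [div_pos_iff]
    right
    exact ⟨hfz, hden⟩
  · have hmono : StrictMonoOn f (Set.Icc 1 z) := by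
      apply strictMonoOn_of_deriv_pos (convex_Icc 1 z)
      · intro t htm
        exact (aux_deriv t (lt_of_lt_of_le one_pos htm.1)).continuousAt.continuousWithinAt
      · intro t htm
        rw [interior_Icc] at htm
        have ht0 : 0 < t := lt_trans one_pos htm.1
        rw [(aux_deriv t ht0).deriv]
        have := Real.log_lt_sub_one_of_pos ht0 (ne_of_gt htm.1)
        linarith
    have hfz : 0 < f z := by
      have := hmono (Set.left_mem_Icc.2 h.le) (Set.right_mem_Icc.2 h.le) h
      linarith [hf1]
    have hden : 0 < (z-1)^3 := by
      have : 0 < z - 1 := by linarith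
      positivity
  
    exact div_pos hfz hden


lemma Valg (a A b c D z L : ℝ) (hA : A ≠ 0) (hD : D ≠ 0) (hz : z ≠ 0) (hz1 : z - 1 ≠ 0)
    (hb : b = z * A / D) :
    (0 - a) - (c*D + a*(0-1)) +
      (((0-c)*D + A*(0-1)) * (1/(z-1) - z/(z-1)^2*L) +
        A*D*(((0*(z-1) - 1*1)/(z-1)^2 -
          ((1*(z-1)^2 - z*((2:ℝ)*(z-1)^(2-1)*1))/((z-1)^2)^2*L + z/(z-1)^2*z⁻¹)) *
          ((b*(0-1)*A - b*D*(0-c))/A^2))) =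
      (A - c*D*z) * ((z^2 - 1 - 2*z*L)/(z-1)^3) := by
  subst hb
  field_simp
  ring

set_option maxHeartbeats 1000000 in
/-- For `0 < x < y ≤ 1` with `r₂(x,y) ≠ 1`, the partial derivative
`∂h^F/∂x (x,y)`, where `h^F(x,y) = h(x, y, r₂(x,y))`, has the same sign as
`(ξ'(y) - ξ'(x))² - ξ''(x)ξ''(y)(y-x)²`. -/
theorem hF_partial_x_sign
    (n : ℕ) (hn : 1 ≤ n) (p : Fin n → ℕ) (hp2 : ∀ i, 2 < p i) (hpmono : StrictMono p)
    (lam : Fin n → ℝ) (hlam : ∀ i, 0 < lam i) (hlamsum : ∑ i, lam i = 1)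
    (x y : ℝ) (hx : 0 < x) (hxy : x < y) (hy : y ≤ 1)
    (hr : r2f (xiF n p lam) x y ≠ 1) :
    (0 < deriv (fun u => hfun (xiF n p lam) u y (r2f (xiF n p lam) u y)) x ↔
        0 < (deriv (xiF n p lam) y - deriv (xiF n p lam) x) ^ 2 -
          deriv (deriv (xiF n p lam)) x * deriv (deriv (xiF n p lam)) y * (y - x) ^ 2) ∧
    (deriv (fun u => hfun (xiF n p lam) u y (r2f (xiF n p lam) u y)) x = 0 ↔
        (deriv (xiF n p lam) y - deriv (xiF n p lam) x) ^ 2 -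
          deriv (deriv (xiF n p lam)) x * deriv (deriv (xiF n p lam)) y * (y - x) ^ 2 = 0) ∧
    (deriv (fun u => hfun (xiF n p lam) u y (r2f (xiF n p lam) u y)) x < 0 ↔
        (deriv (xiF n p lam) y - deriv (xiF n p lam) x) ^ 2 -
          deriv (deriv (xiF n p lam)) x * deriv (deriv (xiF n p lam)) y * (y - x) ^ 2 < 0) := by
  have hyn : Nonempty (Fin n) := ⟨⟨0, hn⟩⟩
  set ξ := xiF n p lam with hxi
  set S1 := S1f n p lam with hS1def
  set S2 := S2f n p lam with hS2def
  -- derivative facts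
  have hderiv1 : ∀ t : ℝ, HasDerivAt ξ (S1 t) t := by
    intro t
    have h : ∀ j ∈ Finset.univ, HasDerivAt (fun x : ℝ => lam j * x ^ p j)
        (lam j * ((p j : ℝ) * t ^ (p j - 1))) t :=
      fun j _ => (hasDerivAt_pow (p j) t).const_mul (lam j)
    exact HasDerivAt.fun_sum h
  have hderiv2 : ∀ t : ℝ, HasDerivAt S1 (S2 t) t := by
    intro t
    have h : ∀ j ∈ Finset.univ, HasDerivAt (fun x : ℝ => lam j * ((p j : ℝ) * x ^ (p j - 1)))
        (lam j * ((p j : ℝ) * (((p j - 1 : ℕ) : ℝ) * t ^ (p j - 1 - 1)))) t := by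
      intro j _
      exact ((hasDerivAt_pow (p j - 1) t).const_mul ((p j : ℝ))).const_mul (lam j)
    exact HasDerivAt.fun_sum h
  have dxi : deriv ξ = S1 := funext fun t => (hderiv1 t).deriv
  have d2 : ∀ t : ℝ, deriv (deriv ξ) t = S2 t := fun t => by
    rw [dxi]; exact (hderiv2 t).deriv
  have hy0 : 0 < y := lt_trans hx hxy
  have hD : 0 < y - x := by linarith
  -- positivity of A and b
  have hA : 0 < S1 y - S1 x := by
    simp only [hS1def, S1f]
    rw [← Finset.sum_sub_distrib]
    apply Finset.sum_pos
    · intro i _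
      have hpi : (0:ℝ) < (p i : ℝ) := by
        have := hp2 i; exact_mod_cast (by omega : 0 < p i)
      have hpow : x ^ (p i - 1) < y ^ (p i - 1) := by
        apply pow_lt_pow_left₀ hxy hx.le
        have := hp2 i; omega
      nlinarith [mul_pos (mul_pos (hlam i) hpi) (sub_pos.2 hpow)]
    · exact Finset.univ_nonempty
  have hApos := hA
  have hAne : S1 y - S1 x ≠ 0 := ne_of_gt hA
  have hb : 0 < S2 y := by
    simp only [hS2def, S2f]
    apply Finset.sum_pos
    · intro i _
      have hpi : (0:ℝ) < (p i : ℝ) := by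
        have := hp2 i; exact_mod_cast (by omega : 0 < p i)
      have hpi1 : (0:ℝ) < ((p i - 1 : ℕ) : ℝ) := by
        have := hp2 i; exact_mod_cast (by omega : 0 < p i - 1)
      exact mul_pos (hlam i) (mul_pos hpi (mul_pos hpi1 (pow_pos hy0 _)))
    · exact Finset.univ_nonempty
  -- the value of r2 at (x,y)
  set z := S2 y * (y - x) / (S1 y - S1 x) with hzdef
  have hr2 : r2f ξ x y = z := by
    rw [r2f, dxi, hzdef]
    rw [show deriv S1 y = S2 y from (hderiv2 y).deriv]
  have hz1 : z ≠ 1 := by rw [← hr2]; exact hr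
  have hz0 : 0 < z := div_pos (mul_pos hb hD) hA
  have hzm1 : z - 1 ≠ 0 := sub_ne_zero.2 hz1
  -- the function hF as an explicit lambda
  have hFeq : (fun u => hfun ξ u y (r2f ξ u y)) =
      (fun u => ξ y - ξ u - S1 u * (y - u) +
        (S1 y - S1 u) * (y - u) *
          (1 / (S2 y * (y - u) / (S1 y - S1 u) - 1) -
            S2 y * (y - u) / (S1 y - S1 u) /
              (S2 y * (y - u) / (S1 y - S1 u) - 1) ^ 2 *
              Real.log (S2 y * (y - u) / (S1 y - S1 u)))) := by
    funext u
    rw [hfun, r2f, dxi]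
    rw [show deriv S1 y = S2 y from (hderiv2 y).deriv]
  -- derivative computation
  have hyu : HasDerivAt (fun u : ℝ => y - u) (0 - 1) x :=
    (hasDerivAt_const x y).sub (hasDerivAt_id x)
  have hS1' : HasDerivAt (fun u => S1 y - S1 u) (0 - S2 x) x :=
    (hasDerivAt_const x (S1 y)).sub (hderiv2 x)
  have hnum : HasDerivAt (fun u : ℝ => S2 y * (y - u)) (S2 y * (0 - 1)) x :=
    hyu.const_mul (S2 y)
  have hZ : HasDerivAt (fun u => S2 y * (y - u) / (S1 y - S1 u))
      ((S2 y * (0 - 1) * (S1 y - S1 x) - S2 y * (y - x) * (0 - S2 x)) / (S1 y - S1 x) ^ 2) x :=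
    hnum.div hS1' hAne
  have hG1 : HasDerivAt (fun w : ℝ => 1 / (w - 1))
      ((0 * (z - 1) - 1 * 1) / (z - 1) ^ 2) z :=
    (hasDerivAt_const z 1).div ((hasDerivAt_id z).sub_const 1) hzm1
  have hpow2 : HasDerivAt (fun w : ℝ => (w - 1) ^ 2) (↑2 * (z - 1) ^ (2 - 1) * 1) z :=
    ((hasDerivAt_id z).sub_const 1).pow 2
  have hq : HasDerivAt (fun w : ℝ => w / (w - 1) ^ 2)
      ((1 * (z - 1) ^ 2 - z * (↑2 * (z - 1) ^ (2 - 1) * 1)) / ((z - 1) ^ 2) ^ 2) z :=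
    (hasDerivAt_id z).div hpow2 (pow_ne_zero 2 hzm1)
  have hlog : HasDerivAt Real.log z⁻¹ z := Real.hasDerivAt_log (ne_of_gt hz0)
  have hG2 : HasDerivAt (fun w : ℝ => w / (w - 1) ^ 2 * Real.log w)
      ((1 * (z - 1) ^ 2 - z * (↑2 * (z - 1) ^ (2 - 1) * 1)) / ((z - 1) ^ 2) ^ 2 * Real.log z +
        z / (z - 1) ^ 2 * z⁻¹) z :=
    hq.mul hlog
  have hG : HasDerivAt (fun w : ℝ => 1 / (w - 1) - w / (w - 1) ^ 2 * Real.log w)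
      ((0 * (z - 1) - 1 * 1) / (z - 1) ^ 2 -
        ((1 * (z - 1) ^ 2 - z * (↑2 * (z - 1) ^ (2 - 1) * 1)) / ((z - 1) ^ 2) ^ 2 * Real.log z +
          z / (z - 1) ^ 2 * z⁻¹)) z :=
    hG1.sub hG2
  set g' := (0 * (z - 1) - 1 * 1) / (z - 1) ^ 2 -
      ((1 * (z - 1) ^ 2 - z * (↑2 * (z - 1) ^ (2 - 1) * 1)) / ((z - 1) ^ 2) ^ 2 * Real.log z +
        z / (z - 1) ^ 2 * z⁻¹) with hg'def
  set z' := (S2 y * (0 - 1) * (S1 y - S1 x) - S2 y * (y - x) * (0 - S2 x)) / (S1 y - S1 x) ^ 2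
    with hz'def
  have hGZ : HasDerivAt (fun u => 1 / (S2 y * (y - u) / (S1 y - S1 u) - 1) -
      S2 y * (y - u) / (S1 y - S1 u) / (S2 y * (y - u) / (S1 y - S1 u) - 1) ^ 2 *
        Real.log (S2 y * (y - u) / (S1 y - S1 u))) (g' * z') x :=
    by have := hG.comp x hZ; exact this
  have hterm0 : HasDerivAt (fun u => ξ y - ξ u) (0 - S1 x) x :=
    (hasDerivAt_const x (ξ y)).sub (hderiv1 x)
  have hterm1 : HasDerivAt (fun u => S1 u * (y - u)) (S2 x * (y - x) + S1 x * (0 - 1)) x :=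
    (hderiv2 x).mul hyu
  have hprod1 : HasDerivAt (fun u => (S1 y - S1 u) * (y - u))
      ((0 - S2 x) * (y - x) + (S1 y - S1 x) * (0 - 1)) x :=
    hS1'.mul hyu
  have hprod2 : HasDerivAt (fun u => (S1 y - S1 u) * (y - u) *
      (1 / (S2 y * (y - u) / (S1 y - S1 u) - 1) -
        S2 y * (y - u) / (S1 y - S1 u) / (S2 y * (y - u) / (S1 y - S1 u) - 1) ^ 2 *
          Real.log (S2 y * (y - u) / (S1 y - S1 u))))
      (((0 - S2 x) * (y - x) + (S1 y - S1 x) * (0 - 1)) *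
          (1 / (z - 1) - z / (z - 1) ^ 2 * Real.log z) +
        (S1 y - S1 x) * (y - x) * (g' * z')) x :=
    hprod1.mul hGZ
  have hF' : HasDerivAt (fun u => ξ y - ξ u - S1 u * (y - u) +
      (S1 y - S1 u) * (y - u) *
        (1 / (S2 y * (y - u) / (S1 y - S1 u) - 1) -
          S2 y * (y - u) / (S1 y - S1 u) /
            (S2 y * (y - u) / (S1 y - S1 u) - 1) ^ 2 *
            Real.log (S2 y * (y - u) / (S1 y - S1 u))))
      ((0 - S1 x) - (S2 x * (y - x) + S1 x * (0 - 1)) +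
        (((0 - S2 x) * (y - x) + (S1 y - S1 x) * (0 - 1)) *
            (1 / (z - 1) - z / (z - 1) ^ 2 * Real.log z) +
          (S1 y - S1 x) * (y - x) * (g' * z'))) x :=
    (hterm0.sub hterm1).add hprod2
  set V := (0 - S1 x) - (S2 x * (y - x) + S1 x * (0 - 1)) +
      (((0 - S2 x) * (y - x) + (S1 y - S1 x) * (0 - 1)) *
          (1 / (z - 1) - z / (z - 1) ^ 2 * Real.log z) +
        (S1 y - S1 x) * (y - x) * (g' * z')) with hVdef
  have hDeq : deriv (fun u => hfun ξ u y (r2f ξ u y)) x = V := by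
    rw [hFeq]; exact hF'.deriv
  -- now the algebra
  set A := S1 y - S1 x with hAdef
  set c := S2 x with hcdef
  set t := A - c * (y - x) * z with htdef
  set K := (z^2 - 1 - 2*z*Real.log z)/(z-1)^3 with hKdef
  have hbz : S2 y = z * A / (y - x) := by
    rw [hzdef]; field_simp
  have hVeq : V = t * K := by
    rw [hVdef, hz'def, hg'def, htdef, hKdef]
    push_cast
    exact Valg (S1 x) A (S2 y) c (y - x) z (Real.log z) hAne hD.ne' hz0.ne' hzm1 hbz
  have hSeq : A ^ 2 - c * S2 y * (y - x) ^ 2 = A * t := by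
    rw [htdef, hbz]
    field_simp [hD.ne']
  have hK : 0 < K := key_pos z hz0 hz1
  -- rewrite the goal
  rw [hDeq, hVeq, d2, d2, dxi]
  rw [show S1 y - S1 x = A from rfl, show S2 x = c from rfl, hSeq]
  refine ⟨⟨fun h => ?_, fun h => ?_⟩, ⟨fun h => ?_, fun h => ?_⟩, ⟨fun h => ?_, fun h => ?_⟩⟩
  · have ht : 0 < t := by
      by_contra hcon; push_neg at hcon; nlinarith
    exact mul_pos hApos ht
  · have ht : 0 < t := by
      by_contra hcon; push_neg at hcon; nlinarith
    exact mul_pos ht hK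
  · have ht : t = 0 := by
      rcases mul_eq_zero.1 h with h' | h'
      · exact h'
      · exact absurd h' hK.ne'
    rw [ht]; ring
  · have ht : t = 0 := by
      rcases mul_eq_zero.1 h with h' | h'
      · exact absurd h' hAne
      · exact h'
    rw [ht]; ring
  · have ht : t < 0 := by
      by_contra hcon; push_neg at hcon; nlinarith
    exact mul_neg_of_pos_of_neg hApos ht
  · have ht : t < 0 := by
      by_contra hcon; push_neg at hcon; nlinarith
    exact mul_neg_of_neg_of_pos ht hK
end
end

section
/- Fix 0 ≤ x < y ≤ 1 with y > 0 and assume r₂(x, y) ≠ 1. Then the partial derivative ∂h^F/∂y (x, y) has the same sign as ξ'''(y)(ξ'(y) − ξ'(x))(y − x) + 2ξ''(y)(ξ'(y) − ξ'(x) − ξ''(y)(y − x)); that is, ∂h^F/∂y (x,y) is positive, zero, or negative exactly when that expression is positive, zero, or negative respectively. -/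
noncomputable section

open Real Finset

/-- first derivative of ξ -/
def d1F (n : ℕ) (p : Fin n → ℕ) (lam : Fin n → ℝ) : ℝ → ℝ :=
  fun v => ∑ j, lam j * ((p j : ℝ) * v ^ (p j - 1))

/-- second derivative of ξ -/
def d2F (n : ℕ) (p : Fin n → ℕ) (lam : Fin n → ℝ) : ℝ → ℝ :=
  fun v => ∑ j, lam j * ((p j : ℝ) * (((p j - 1 : ℕ) : ℝ) * v ^ (p j - 1 - 1)))

/-- third derivative of ξ -/
def d3F (n : ℕ) (p : Fin n → ℕ) (lam : Fin n → ℝ) : ℝ → ℝ :=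
  fun v => ∑ j, lam j * ((p j : ℝ) * (((p j - 1 : ℕ) : ℝ) *
    (((p j - 1 - 1 : ℕ) : ℝ) * v ^ (p j - 1 - 1 - 1))))

lemma hasDerivAt_xiF_s15 (n : ℕ) (p : Fin n → ℕ) (lam : Fin n → ℝ) (v : ℝ) :
    HasDerivAt (xiF n p lam) (d1F n p lam v) v :=
  HasDerivAt.fun_sum fun j _ => (hasDerivAt_pow (p j) v).const_mul (lam j)

lemma hasDerivAt_d1F (n : ℕ) (p : Fin n → ℕ) (lam : Fin n → ℝ) (v : ℝ) :
    HasDerivAt (d1F n p lam) (d2F n p lam v) v :=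
  HasDerivAt.fun_sum fun j _ =>
    (((hasDerivAt_pow (p j - 1) v).const_mul ((p j : ℝ))).const_mul (lam j))

lemma hasDerivAt_d2F (n : ℕ) (p : Fin n → ℕ) (lam : Fin n → ℝ) (v : ℝ) :
    HasDerivAt (d2F n p lam) (d3F n p lam v) v :=
  HasDerivAt.fun_sum fun j _ =>
    ((((hasDerivAt_pow (p j - 1 - 1) v).const_mul (((p j - 1 : ℕ) : ℝ))).const_mul
      ((p j : ℝ))).const_mul (lam j))

/-- the function (t+1) log t - 2(t-1) has derivative log t + (t+1)/t - 2 -/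
lemma hasDerivAt_faux {t : ℝ} (ht : 0 < t) :
    HasDerivAt (fun t : ℝ => (t + 1) * Real.log t - 2 * (t - 1))
      (1 * Real.log t + (t + 1) * t⁻¹ - 2 * 1) t :=
  (((hasDerivAt_id t).add_const 1).mul (Real.hasDerivAt_log ht.ne')).sub
    (((hasDerivAt_id t).sub_const 1).const_mul 2)

lemma faux_deriv_pos {t : ℝ} (ht : 0 < t) (ht1 : t ≠ 1) :
    0 < 1 * Real.log t + (t + 1) * t⁻¹ - 2 * 1 := by
  have h := Real.log_lt_sub_one_of_pos (inv_pos.2 ht) (fun h => ht1 (inv_eq_one.mp h))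
  rw [Real.log_inv] at h
  have h2 : (t + 1) * t⁻¹ = 1 + t⁻¹ := by field_simp
  rw [h2]; linarith

lemma faux_sign {z : ℝ} (hz : 0 < z) (hz1 : z ≠ 1) :
    0 < ((z + 1) * Real.log z - 2 * (z - 1)) / (z - 1) ^ 3 := by
  set f : ℝ → ℝ := fun t => (t + 1) * Real.log t - 2 * (t - 1) with hf
  have hf1 : f 1 = 0 := by simp [hf]
  rcases lt_or_gt_of_ne hz1 with hlt | hgt
  · -- z < 1 : f strictly mono on [z,1], f z < 0, (z-1)^3 < 0
    have hmono : StrictMonoOn f (Set.Icc z 1) := by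
      apply strictMonoOn_of_deriv_pos (convex_Icc z 1)
      · intro t ht
        exact (hasDerivAt_faux (lt_of_lt_of_le hz ht.1)).continuousAt.continuousWithinAt
      · intro t ht
        rw [interior_Icc] at ht
        rw [(hasDerivAt_faux (hz.trans ht.1)).deriv]
        exact faux_deriv_pos (hz.trans ht.1) (ne_of_lt ht.2)
    have hfz : f z < 0 := by
      have := hmono (Set.left_mem_Icc.2 hlt.le) (Set.right_mem_Icc.2 hlt.le) hlt
      rw [hf1] at this; exact this
    have hcube : (z - 1) ^ 3 < 0 := Odd.pow_neg (by decide) (by linarith)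
    exact div_pos_iff.mpr (Or.inr ⟨hfz, hcube⟩)
  · -- z > 1
    have hmono : StrictMonoOn f (Set.Icc 1 z) := by
      apply strictMonoOn_of_deriv_pos (convex_Icc 1 z)
      · intro t ht
        exact (hasDerivAt_faux (lt_of_lt_of_le one_pos ht.1)).continuousAt.continuousWithinAt
      · intro t ht
        rw [interior_Icc] at ht
        rw [(hasDerivAt_faux (one_pos.trans ht.1)).deriv]
        exact faux_deriv_pos (one_pos.trans ht.1) (ne_of_gt ht.1)
    have hfz : 0 < f z := by
      have := hmono (Set.left_mem_Icc.2 hgt.le) (Set.right_mem_Icc.2 hgt.le) hgt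
      rw [hf1] at this; exact this
    exact div_pos hfz (pow_pos (by linarith) 3)


set_option maxHeartbeats 1000000 in
lemma key_alg (a1 a0 b c u L : ℝ) (ha : a1 - a0 ≠ 0) (hba : b * u - (a1 - a0) ≠ 0) :
    a1 - a0 * 1 + ((b * u + (a1 - a0) * 1) *
        (1 / (b * u / (a1 - a0) - 1) -
          b * u / (a1 - a0) / (b * u / (a1 - a0) - 1) ^ 2 *
            L) +
        (a1 - a0) * u *
          ((((b * u / (a1 - a0) + 1) * L - 2 * (b * u / (a1 - a0) - 1)) / (b * u / (a1 - a0) - 1) ^ 3) *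
            (((c * u + b * 1) * (a1 - a0) -
              b * u * b) / (a1 - a0) ^ 2))) =
      (u / (a1 - a0) * (((b * u / (a1 - a0) + 1) * L - 2 * (b * u / (a1 - a0) - 1)) / (b * u / (a1 - a0) - 1) ^ 3)) *
        (c * (a1 - a0) * u +
          2 * b * (a1 - a0 - b * u)) := by
  simp only [mul_one]
  have h1 : b * u / (a1 - a0) - 1 = (b * u - (a1 - a0)) / (a1 - a0) := by field_simp
  rw [h1]
  set a := a1 - a0 with hadef
  clear_value a
  field_simp
  ring

lemma sign_mul_left {c a : ℝ} (hc : 0 < c) :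
    (0 < c * a ↔ 0 < a) ∧ (c * a = 0 ↔ a = 0) ∧ (c * a < 0 ↔ a < 0) := by
  refine ⟨mul_pos_iff_of_pos_left hc, ?_, ?_⟩
  · simp [mul_eq_zero, hc.ne']
  · constructor
    · intro h; by_contra h'; push_neg at h'; nlinarith
    · intro h; exact mul_neg_of_pos_of_neg hc h

set_option maxHeartbeats 3000000 in
/-- For `0 ≤ x < y ≤ 1` with `y > 0` and `r₂(x,y) ≠ 1`, the partial
derivative `∂h^F/∂y (x,y)`, where `h^F(x,y) = h(x, y, r₂(x,y))`, has the same sign as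
`ξ'''(y)(ξ'(y) - ξ'(x))(y-x) + 2ξ''(y)(ξ'(y) - ξ'(x) - ξ''(y)(y-x))`. -/
theorem hF_partial_y_sign
    (n : ℕ) (hn : 1 ≤ n) (p : Fin n → ℕ) (hp2 : ∀ i, 2 < p i) (hpmono : StrictMono p)
    (lam : Fin n → ℝ) (hlam : ∀ i, 0 < lam i) (hlamsum : ∑ i, lam i = 1)
    (x y : ℝ) (hx : 0 ≤ x) (hxy : x < y) (hy : y ≤ 1) (hy0 : 0 < y)
    (hr : r2f (xiF n p lam) x y ≠ 1) :
    (0 < deriv (fun v => hfun (xiF n p lam) x v (r2f (xiF n p lam) x v)) y ↔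
        0 < deriv (deriv (deriv (xiF n p lam))) y *
              (deriv (xiF n p lam) y - deriv (xiF n p lam) x) * (y - x) +
            2 * deriv (deriv (xiF n p lam)) y *
              (deriv (xiF n p lam) y - deriv (xiF n p lam) x -
                deriv (deriv (xiF n p lam)) y * (y - x))) ∧
    (deriv (fun v => hfun (xiF n p lam) x v (r2f (xiF n p lam) x v)) y = 0 ↔
        deriv (deriv (deriv (xiF n p lam))) y *
            (deriv (xiF n p lam) y - deriv (xiF n p lam) x) * (y - x) +
          2 * deriv (deriv (xiF n p lam)) y *
            (deriv (xiF n p lam) y - deriv (xiF n p lam) x -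
              deriv (deriv (xiF n p lam)) y * (y - x)) = 0) ∧
    (deriv (fun v => hfun (xiF n p lam) x v (r2f (xiF n p lam) x v)) y < 0 ↔
        deriv (deriv (deriv (xiF n p lam))) y *
            (deriv (xiF n p lam) y - deriv (xiF n p lam) x) * (y - x) +
          2 * deriv (deriv (xiF n p lam)) y *
            (deriv (xiF n p lam) y - deriv (xiF n p lam) x -
              deriv (deriv (xiF n p lam)) y * (y - x)) < 0) := by
  have hFin : Nonempty (Fin n) := Fin.pos_iff_nonempty.mp hn
  set ξ := xiF n p lam with hξdef
  set f1 := d1F n p lam with hf1def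
  set f2 := d2F n p lam with hf2def
  have e1 : deriv ξ = f1 := funext fun v => (hasDerivAt_xiF_s15 n p lam v).deriv
  have e2 : deriv f1 = f2 := funext fun v => (hasDerivAt_d1F n p lam v).deriv
  have e3 : deriv f2 = d3F n p lam := funext fun v => (hasDerivAt_d2F n p lam v).deriv
  -- positivity facts
  have ha_pos : 0 < f1 y - f1 x := by
    rw [sub_pos, hf1def]
    apply Finset.sum_lt_sum_of_nonempty univ_nonempty
    intro j _
    apply mul_lt_mul_of_pos_left _ (hlam j)
    apply mul_lt_mul_of_pos_left _ (by have := hp2 j; exact_mod_cast (by omega : 0 < p j) : (0:ℝ) < (p j : ℝ))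
    exact pow_lt_pow_left₀ hxy hx (by have := hp2 j; omega)
  have hb_pos : 0 < f2 y := by
    rw [hf2def]
    apply Finset.sum_pos _ univ_nonempty
    intro j _
    have h1 : (0:ℝ) < (p j : ℝ) := by have := hp2 j; exact_mod_cast (by omega : 0 < p j)
    have h2 : (0:ℝ) < ((p j - 1 : ℕ) : ℝ) := by
      exact_mod_cast (by have := hp2 j; omega : 0 < p j - 1)
    exact mul_pos (hlam j) (mul_pos h1 (mul_pos h2 (pow_pos hy0 _)))
  have hu : 0 < y - x := sub_pos.2 hxy
  have ha_ne : f1 y - f1 x ≠ 0 := ha_pos.ne'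
  -- the value z
  have hreq : r2f ξ x y = f2 y * (y - x) / (f1 y - f1 x) := by
    simp only [r2f, e1, e2]
  set z := f2 y * (y - x) / (f1 y - f1 x) with hzdef
  have hz_pos : 0 < z := div_pos (mul_pos hb_pos hu) ha_pos
  have hz1 : z ≠ 1 := by rw [← hreq]; exact hr
  have hz1' : z - 1 ≠ 0 := sub_ne_zero.2 hz1
  -- derivative of the z-map
  have hZ : HasDerivAt (fun v => f2 v * (v - x) / (f1 v - f1 x))
      (((d3F n p lam y * (y - x) + f2 y * 1) * (f1 y - f1 x) -
        f2 y * (y - x) * f2 y) / (f1 y - f1 x) ^ 2) y := by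
    exact HasDerivAt.div ((hasDerivAt_d2F n p lam y).mul ((hasDerivAt_id y).sub_const x))
      ((hasDerivAt_d1F n p lam y).sub_const (f1 x)) ha_ne
  -- derivative of g at z
  have hG : HasDerivAt (fun t : ℝ => 1 / (t - 1) - t / (t - 1) ^ 2 * Real.log t)
      (((z + 1) * Real.log z - 2 * (z - 1)) / (z - 1) ^ 3) z := by
    have h1 : HasDerivAt (fun t : ℝ => t - 1) 1 z := (hasDerivAt_id z).sub_const 1
    have h2 := (hasDerivAt_const z (1:ℝ)).div h1 hz1'
    have h3 := h1.pow 2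
    have h4 := (hasDerivAt_id z).div h3 (pow_ne_zero 2 hz1')
    have h5 := Real.hasDerivAt_log hz_pos.ne'
    have h6 := h2.sub (h4.mul h5)
    refine h6.congr_deriv ?_
    simp only [Pi.pow_apply, id, Pi.div_apply]
    field_simp
    ring
  have hGZ : HasDerivAt (fun v =>
      1 / (f2 v * (v - x) / (f1 v - f1 x) - 1) -
        f2 v * (v - x) / (f1 v - f1 x) / (f2 v * (v - x) / (f1 v - f1 x) - 1) ^ 2 *
          Real.log (f2 v * (v - x) / (f1 v - f1 x)))
      ((((z + 1) * Real.log z - 2 * (z - 1)) / (z - 1) ^ 3) *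
        (((d3F n p lam y * (y - x) + f2 y * 1) * (f1 y - f1 x) -
          f2 y * (y - x) * f2 y) / (f1 y - f1 x) ^ 2)) y := by
    have hG' := hG
    rw [hzdef] at hG'
    exact hG'.comp y hZ
  -- rewrite the function
  have hfun_eq : (fun v => hfun ξ x v (r2f ξ x v)) = fun v =>
      ξ v - ξ x - f1 x * (v - x) + (f1 v - f1 x) * (v - x) *
        (1 / (f2 v * (v - x) / (f1 v - f1 x) - 1) -
          f2 v * (v - x) / (f1 v - f1 x) / (f2 v * (v - x) / (f1 v - f1 x) - 1) ^ 2 *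
            Real.log (f2 v * (v - x) / (f1 v - f1 x))) := by
    funext v
    simp only [hfun, r2f, e1, e2]
  -- total derivative
  have hbig : HasDerivAt (fun v => hfun ξ x v (r2f ξ x v))
      (f1 y - f1 x * 1 + ((f2 y * (y - x) + (f1 y - f1 x) * 1) *
        (1 / (f2 y * (y - x) / (f1 y - f1 x) - 1) -
          f2 y * (y - x) / (f1 y - f1 x) / (f2 y * (y - x) / (f1 y - f1 x) - 1) ^ 2 *
            Real.log (f2 y * (y - x) / (f1 y - f1 x))) +
        (f1 y - f1 x) * (y - x) *
          ((((z + 1) * Real.log z - 2 * (z - 1)) / (z - 1) ^ 3) *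
            (((d3F n p lam y * (y - x) + f2 y * 1) * (f1 y - f1 x) -
              f2 y * (y - x) * f2 y) / (f1 y - f1 x) ^ 2)))) y := by
    rw [hfun_eq]
    have T2 : HasDerivAt (fun v => ξ v - ξ x) (f1 y) y :=
      (hasDerivAt_xiF_s15 n p lam y).sub_const (ξ x)
    have T3 : HasDerivAt (fun v => f1 x * (v - x)) (f1 x * 1) y :=
      ((hasDerivAt_id y).sub_const x).const_mul (f1 x)
    have T5 : HasDerivAt (fun v => (f1 v - f1 x) * (v - x))
        (f2 y * (y - x) + (f1 y - f1 x) * 1) y :=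
      ((hasDerivAt_d1F n p lam y).sub_const (f1 x)).mul ((hasDerivAt_id y).sub_const x)
    have := (T2.sub T3).add (T5.mul hGZ)
    exact this
  rw [e1, e2, e3, hbig.deriv, hzdef]
  have hba : f2 y * (y - x) - (f1 y - f1 x) ≠ 0 := by
    intro h
    apply hz1
    rw [hzdef]
    rw [sub_eq_zero] at h
    rw [h]
    field_simp
  rw [key_alg (f1 y) (f1 x) (f2 y) (d3F n p lam y) (y - x)
      (Real.log (f2 y * (y - x) / (f1 y - f1 x))) ha_ne hba]
  have hc : 0 < (y - x) / (f1 y - f1 x) *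
      (((f2 y * (y - x) / (f1 y - f1 x) + 1) * Real.log (f2 y * (y - x) / (f1 y - f1 x)) -
          2 * (f2 y * (y - x) / (f1 y - f1 x) - 1)) /
        (f2 y * (y - x) / (f1 y - f1 x) - 1) ^ 3) :=
    mul_pos (div_pos hu ha_pos) (by rw [← hzdef]; exact faux_sign hz_pos hz1)
  exact sign_mul_left hc
end
end

section
/- Fix 0 ≤ a < b ≤ 1 and define w : (a, b) → ℝ by w(x) = (x − a)(ξ'(b) − ξ'(x)) / ((b − x)(ξ'(x) − ξ'(a))). Then for every x ∈ (a, b), the derivative w'(x) has the same sign as t(x) := (b − a)(ξ'(b) − ξ'(x))(ξ'(x) − ξ'(a)) − ξ''(x)(ξ'(b) − ξ'(a))(b − x)(x − a); that is, w'(x) is positive, zero, or negative exactly when t(x) is positive, zero, or negative respectively. -/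
noncomputable section

/-- For `0 ≤ a < b ≤ 1` and
`w(x) = (x-a)(ξ'(b)-ξ'(x)) / ((b-x)(ξ'(x)-ξ'(a)))`, on `(a,b)` the derivative `w'(x)` has the
same sign as `t(x) = (b-a)(ξ'(b)-ξ'(x))(ξ'(x)-ξ'(a)) - ξ''(x)(ξ'(b)-ξ'(a))(b-x)(x-a)`. -/
theorem w_deriv_sign
    (n : ℕ) (hn : 1 ≤ n) (p : Fin n → ℕ) (hp2 : ∀ i, 2 < p i) (hpmono : StrictMono p)
    (lam : Fin n → ℝ) (hlam : ∀ i, 0 < lam i) (hlamsum : ∑ i, lam i = 1)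
    (a b : ℝ) (ha : 0 ≤ a) (hab : a < b) (hb : b ≤ 1)
    (x : ℝ) (hx : x ∈ Set.Ioo a b) :
    (0 < deriv (fun u => ((u - a) * (deriv (xiF n p lam) b - deriv (xiF n p lam) u)) /
          ((b - u) * (deriv (xiF n p lam) u - deriv (xiF n p lam) a))) x ↔
        0 < (b - a) * (deriv (xiF n p lam) b - deriv (xiF n p lam) x) *
              (deriv (xiF n p lam) x - deriv (xiF n p lam) a) -
            deriv (deriv (xiF n p lam)) x *
              (deriv (xiF n p lam) b - deriv (xiF n p lam) a) * (b - x) * (x - a)) ∧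
    (deriv (fun u => ((u - a) * (deriv (xiF n p lam) b - deriv (xiF n p lam) u)) /
          ((b - u) * (deriv (xiF n p lam) u - deriv (xiF n p lam) a))) x = 0 ↔
        (b - a) * (deriv (xiF n p lam) b - deriv (xiF n p lam) x) *
            (deriv (xiF n p lam) x - deriv (xiF n p lam) a) -
          deriv (deriv (xiF n p lam)) x *
            (deriv (xiF n p lam) b - deriv (xiF n p lam) a) * (b - x) * (x - a) = 0) ∧
    (deriv (fun u => ((u - a) * (deriv (xiF n p lam) b - deriv (xiF n p lam) u)) /
          ((b - u) * (deriv (xiF n p lam) u - deriv (xiF n p lam) a))) x < 0 ↔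
        (b - a) * (deriv (xiF n p lam) b - deriv (xiF n p lam) x) *
            (deriv (xiF n p lam) x - deriv (xiF n p lam) a) -
          deriv (deriv (xiF n p lam)) x *
            (deriv (xiF n p lam) b - deriv (xiF n p lam) a) * (b - x) * (x - a) < 0) := by
  set f := deriv (xiF n p lam) with hf_def
  obtain ⟨hax, hxb⟩ := hx
  -- first derivative of ξ
  have hxi : ∀ y : ℝ, HasDerivAt (xiF n p lam)
      (∑ j, lam j * ((p j : ℝ) * y ^ (p j - 1))) y := by
    intro y
    apply HasDerivAt.fun_sum
    intro j _
    exact (hasDerivAt_pow (p j) y).const_mul (lam j)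
  have hf_eq : f = fun y => ∑ j, lam j * ((p j : ℝ) * y ^ (p j - 1)) :=
    funext fun y => (hxi y).deriv
  -- second derivative of ξ at x
  have hF : HasDerivAt f
      (∑ j, lam j * ((p j : ℝ) * ((↑(p j - 1) : ℝ) * x ^ (p j - 1 - 1)))) x := by
    rw [hf_eq]
    apply HasDerivAt.fun_sum
    intro j _
    exact (((hasDerivAt_pow (p j - 1) x).const_mul ((p j : ℝ))).const_mul (lam j))
  -- strict monotonicity of f on [0, ∞)
  have hmono : ∀ u v : ℝ, 0 ≤ u → u < v → f u < f v := by
    intro u v hu huv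
    rw [hf_eq]
    have hne : (Finset.univ : Finset (Fin n)).Nonempty :=
      Finset.univ_nonempty_iff.mpr ⟨⟨0, hn⟩⟩
    apply Finset.sum_lt_sum_of_nonempty hne
    intro j _
    have hpj : (0 : ℝ) < (p j : ℝ) := by
      exact_mod_cast Nat.zero_lt_of_lt (hp2 j)
    have hpow : u ^ (p j - 1) < v ^ (p j - 1) := by
      apply pow_lt_pow_left₀ huv hu
      have := hp2 j; omega
    have := mul_lt_mul_of_pos_left hpow hpj
    exact mul_lt_mul_of_pos_left this (hlam j)
  have hfa : f a < f x := hmono a x ha hax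
  have hDne : (b - x) * (f x - f a) ≠ 0 := by
    have h1 : 0 < b - x := by linarith
    have h2 : 0 < f x - f a := by linarith
    positivity
  set c := ∑ j, lam j * ((p j : ℝ) * ((↑(p j - 1) : ℝ) * x ^ (p j - 1 - 1))) with hc_def
  have hN : HasDerivAt (fun u => (u - a) * (f b - f u))
      (1 * (f b - f x) + (x - a) * (0 - c)) x :=
    ((hasDerivAt_id x).sub_const a).mul ((hasDerivAt_const x (f b)).sub hF)
  have hD : HasDerivAt (fun u => (b - u) * (f u - f a))
      ((0 - 1) * (f x - f a) + (b - x) * c) x :=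
    ((hasDerivAt_const x b).sub (hasDerivAt_id x)).mul (hF.sub_const (f a))
  have hW : HasDerivAt
      (fun u => ((u - a) * (f b - f u)) / ((b - u) * (f u - f a)))
      (((b - a) * (f b - f x) * (f x - f a) - c * (f b - f a) * (b - x) * (x - a)) /
        ((b - x) * (f x - f a)) ^ 2) x := by
    have h := hN.fun_div hD hDne
    refine h.congr_deriv ?_
    rw [div_eq_div_iff (by positivity) (by positivity)]
    ring
  have hd2 : (0:ℝ) < ((b - x) * (f x - f a)) ^ 2 := by positivity
  rw [hW.deriv, ← hF.deriv]
  refine ⟨?_, ?_, ?_⟩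
  · rw [lt_div_iff₀ hd2, zero_mul]
  · rw [div_eq_zero_iff]
    simp [ne_of_gt hd2]
  · rw [div_lt_iff₀ hd2, zero_mul]
end
end
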